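/- In the step-two Carnot group, |X_x d_G^4(x,y)| = |X_y d_G^4(x,y)| and X_x^2 d_G^4(x,y) = X_y^2 d_G^4(x,y) for all x, y, and each of these quantities vanishes exactly on the set {(x,y) : x_h = y_h}. -/

import Mathlib

open Matrix

open Finset
namespace CarnotAux

variable {m k : ℕ}

noncomputable def pr1 (m k : ℕ) (i : Fin m) : ((Fin m → ℝ) × (Fin k → ℝ)) →L[ℝ] ℝ :=
  (ContinuousLinearMap.proj i).comp (ContinuousLinearMap.fst ℝ (Fin m → ℝ) (Fin k → ℝ))
noncomputable def pr2 (m k : ℕ) (l : Fin k) : ((Fin m → ℝ) × (Fin k → ℝ)) →L[ℝ] ℝ :=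
  (ContinuousLinearMap.proj l).comp (ContinuousLinearMap.snd ℝ (Fin m → ℝ) (Fin k → ℝ))

lemma hasFDerivAt_pr1 (i : Fin m) (z : (Fin m → ℝ) × (Fin k → ℝ)) :
    HasFDerivAt (fun z : (Fin m → ℝ) × (Fin k → ℝ) => z.1 i) (pr1 m k i) z :=
  (pr1 m k i).hasFDerivAt

lemma hasFDerivAt_pr2 (l : Fin k) (z : (Fin m → ℝ) × (Fin k → ℝ)) :
    HasFDerivAt (fun z : (Fin m → ℝ) × (Fin k → ℝ) => z.2 l) (pr2 m k l) z :=
  (pr2 m k l).hasFDerivAt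

@[simp] lemma pr1_apply (i : Fin m) (v : (Fin m → ℝ) × (Fin k → ℝ)) :
    pr1 m k i v = v.1 i := rfl
@[simp] lemma pr2_apply (l : Fin k) (v : (Fin m → ℝ) × (Fin k → ℝ)) :
    pr2 m k l v = v.2 l := rfl

/-- `S c z = |z.1 - c|²`. -/
def Sf (c : Fin m → ℝ) (z : (Fin m → ℝ) × (Fin k → ℝ)) : ℝ :=
  ∑ i, (z.1 i - c i) * (z.1 i - c i)

/-- `U B c d z l = z.2 l - d l + (B l z.1)⬝c`. -/
def Uf (B : Fin k → Matrix (Fin m) (Fin m) ℝ) (c : Fin m → ℝ) (d : Fin k → ℝ)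
    (z : (Fin m → ℝ) × (Fin k → ℝ)) (l : Fin k) : ℝ :=
  z.2 l - d l + ∑ i, (∑ j, B l i j * z.1 j) * c i

/-- `W B c z l j = (B l (z.1 - c)) j`. -/
def Wf (B : Fin k → Matrix (Fin m) (Fin m) ℝ) (c : Fin m → ℝ)
    (z : (Fin m → ℝ) × (Fin k → ℝ)) (l : Fin k) (j : Fin m) : ℝ :=
  ∑ j', B l j j' * (z.1 j' - c j')

def Gf (B : Fin k → Matrix (Fin m) (Fin m) ℝ) (c : Fin m → ℝ) (d : Fin k → ℝ)
    (z : (Fin m → ℝ) × (Fin k → ℝ)) : ℝ :=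
  Sf c z * Sf c z + ∑ l, Uf B c d z l * Uf B c d z l

/-- First horizontal derivative formula. -/
def XF (B : Fin k → Matrix (Fin m) (Fin m) ℝ) (c : Fin m → ℝ) (d : Fin k → ℝ)
    (z : (Fin m → ℝ) × (Fin k → ℝ)) (j : Fin m) : ℝ :=
  4 * Sf c z * (z.1 j - c j) + ∑ l, 2 * Uf B c d z l * Wf B c z l j

lemma skew {B : Fin k → Matrix (Fin m) (Fin m) ℝ} (hB : ∀ i, (B i)ᵀ = -(B i))
    (l : Fin k) (i j : Fin m) : B l j i = - B l i j := by
  have := congrFun (congrFun (hB l) i) j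
  simpa [Matrix.transpose_apply] using this

lemma hasS (c : Fin m → ℝ) (z : (Fin m → ℝ) × (Fin k → ℝ)) :
    HasFDerivAt (Sf (k := k) c) (∑ i, (2 * (z.1 i - c i)) • pr1 m k i) z := by
  have h := HasFDerivAt.fun_sum (u := univ) (fun i (_ : i ∈ univ) =>
    ((hasFDerivAt_pr1 (k := k) i z).sub_const (c i)).mul ((hasFDerivAt_pr1 i z).sub_const (c i)))
  refine h.congr_fderiv ?_
  refine Finset.sum_congr rfl fun i _ => ?_
  rw [← add_smul]
  congr 1
  ring

lemma hasU (B : Fin k → Matrix (Fin m) (Fin m) ℝ) (c : Fin m → ℝ) (d : Fin k → ℝ)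
    (l : Fin k) (z : (Fin m → ℝ) × (Fin k → ℝ)) :
    HasFDerivAt (fun z => Uf B c d z l)
      (pr2 m k l + ∑ i, c i • ∑ j, (B l i j) • pr1 m k j) z := by
  have h1 : HasFDerivAt (fun z : (Fin m → ℝ) × (Fin k → ℝ) =>
      ∑ i, (∑ j, B l i j * z.1 j) * c i) (∑ i, c i • ∑ j, (B l i j) • pr1 m k j) z := by
    refine HasFDerivAt.fun_sum fun i _ => ?_
    have := (HasFDerivAt.fun_sum (fun j (_ : j ∈ univ) =>
      (hasFDerivAt_pr1 (k := k) j z).const_mul (B l i j))).mul_const (c i)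
    simpa [smul_smul, Finset.smul_sum] using this
  exact ((hasFDerivAt_pr2 l z).sub_const (d l)).add h1

lemma hasW (B : Fin k → Matrix (Fin m) (Fin m) ℝ) (c : Fin m → ℝ)
    (l : Fin k) (j : Fin m) (z : (Fin m → ℝ) × (Fin k → ℝ)) :
    HasFDerivAt (fun z => Wf B c z l j) (∑ j', (B l j j') • pr1 m k j') z :=
  HasFDerivAt.fun_sum fun j' _ =>
    ((hasFDerivAt_pr1 (k := k) j' z).sub_const (c j')).const_mul (B l j j')

end CarnotAux

namespace CarnotAux2
open CarnotAux
variable {m k : ℕ}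

lemma master1 (B : Fin k → Matrix (Fin m) (Fin m) ℝ) (c : Fin m → ℝ) (d : Fin k → ℝ)
    (z v : (Fin m → ℝ) × (Fin k → ℝ)) :
    fderiv ℝ (Gf B c d) z v
      = 4 * Sf c z * (∑ i, (z.1 i - c i) * v.1 i)
        + ∑ l, 2 * Uf B c d z l * (v.2 l + ∑ i, c i * ∑ j, B l i j * v.1 j) := by
  have h : HasFDerivAt (Gf B c d)
      ((Sf c z • ∑ i, (2 * (z.1 i - c i)) • pr1 m k i
        + Sf c z • ∑ i, (2 * (z.1 i - c i)) • pr1 m k i)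
       + ∑ l, (Uf B c d z l • (pr2 m k l + ∑ i, c i • ∑ j, (B l i j) • pr1 m k j)
        + Uf B c d z l • (pr2 m k l + ∑ i, c i • ∑ j, (B l i j) • pr1 m k j))) z := by
    exact ((hasS c z).mul (hasS c z)).add
      (HasFDerivAt.fun_sum fun l _ => (hasU B c d l z).mul (hasU B c d l z))
  rw [h.fderiv]
  simp only [ContinuousLinearMap.add_apply, ContinuousLinearMap.smul_apply,
    ContinuousLinearMap.sum_apply, pr1_apply, pr2_apply, smul_eq_mul]
  have e1 : ∑ i, 2 * (z.1 i - c i) * v.1 i = 2 * ∑ i, (z.1 i - c i) * v.1 i := by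
    rw [Finset.mul_sum]; exact Finset.sum_congr rfl fun i _ => by ring
  have e2 : ∀ (f : Fin k → ℝ), ∑ l, (Uf B c d z l * f l + Uf B c d z l * f l)
      = ∑ l, 2 * Uf B c d z l * f l :=
    fun f => Finset.sum_congr rfl fun l _ => by ring
  rw [e1, e2 (fun l => v.2 l + ∑ i, c i * ∑ j, B l i j * v.1 j)]
  ring

lemma key {B : Fin k → Matrix (Fin m) (Fin m) ℝ} (hB : ∀ i, (B i)ᵀ = -(B i))
    (c a : Fin m → ℝ) (l : Fin k) (i : Fin m) :
    (∑ j', B l i j' * a j') + ∑ i', c i' * B l i' i = ∑ j', B l i j' * (a j' - c j') := by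
  have h2 : ∑ i', c i' * B l i' i = ∑ i', -(B l i i' * c i') :=
    Finset.sum_congr rfl fun i' _ => by rw [skew hB l i' i]; ring
  rw [h2, ← Finset.sum_add_distrib]
  exact Finset.sum_congr rfl fun j' _ => by ring

lemma single_eval (j : Fin m) (f : Fin m → ℝ) :
    ∑ i, f i * (Pi.single j 1 : Fin m → ℝ) i = f j := by
  simp [Pi.single_apply, mul_ite]

lemma master1dir {B : Fin k → Matrix (Fin m) (Fin m) ℝ} (hB : ∀ i, (B i)ᵀ = -(B i))
    (c : Fin m → ℝ) (d : Fin k → ℝ) (z : (Fin m → ℝ) × (Fin k → ℝ)) (j : Fin m) :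
    fderiv ℝ (Gf B c d) z ((Pi.single j 1, fun l => (B l *ᵥ z.1) j)) = XF B c d z j := by
  rw [master1]
  dsimp only
  unfold XF
  congr 1
  · rw [single_eval]
  · refine Finset.sum_congr rfl fun l _ => ?_
    congr 1
    have h4 : ∀ i : Fin m, ∑ j', B l i j' * (Pi.single j 1 : Fin m → ℝ) j' = B l i j := fun i => single_eval j _
    simp only [h4]
    have : (B l *ᵥ z.1) j = ∑ j', B l j j' * z.1 j' := by simp [mulVec, dotProduct]
    rw [this, key hB]
    rfl

lemma master2dir {B : Fin k → Matrix (Fin m) (Fin m) ℝ} (hB : ∀ i, (B i)ᵀ = -(B i))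
    (c : Fin m → ℝ) (d : Fin k → ℝ) (p : (Fin m → ℝ) × (Fin k → ℝ)) (i j : Fin m) :
    fderiv ℝ (fun z => XF B c d z j) p ((Pi.single i 1, fun l => (B l *ᵥ p.1) i))
      = 8 * (p.1 i - c i) * (p.1 j - c j) + 4 * Sf c p * (Pi.single i 1 : Fin m → ℝ) j
        + ∑ l, (2 * Uf B c d p l * B l j i + 2 * Wf B c p l i * Wf B c p l j) := by
  have h : HasFDerivAt (fun z => XF B c d z j)
      (((4 * Sf c p) • pr1 m k j
          + (p.1 j - c j) • ((4:ℝ) • ∑ i', (2 * (p.1 i' - c i')) • pr1 m k i'))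
        + ∑ l, ((2 * Uf B c d p l) • (∑ j', (B l j j') • pr1 m k j')
          + Wf B c p l j • ((2:ℝ) • (pr2 m k l + ∑ i', c i' • ∑ j', (B l i' j') • pr1 m k j')))) p := by
    unfold XF
    exact (((hasS c p).const_mul 4).mul ((hasFDerivAt_pr1 j p).sub_const (c j))).add
      (HasFDerivAt.fun_sum fun l _ => ((hasU B c d l p).const_mul 2).mul (hasW B c l j p))
  rw [h.fderiv]
  simp only [ContinuousLinearMap.add_apply, ContinuousLinearMap.smul_apply,
    ContinuousLinearMap.sum_apply, pr1_apply, pr2_apply, smul_eq_mul]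
  have e1 : ∑ i', 2 * (p.1 i' - c i') * (Pi.single i 1 : Fin m → ℝ) i' = 2 * (p.1 i - c i) := by
    rw [show (2 * (p.1 i - c i)) = (fun i' => 2 * (p.1 i' - c i')) i from rfl]
    exact single_eval i _
  rw [e1]
  have e2 : ∀ l : Fin k, ∑ j', B l j j' * (Pi.single i 1 : Fin m → ℝ) j' = B l j i :=
    fun l => single_eval i _
  have e3 : ∀ l : Fin k, (B l *ᵥ p.1) i + ∑ i', c i' * ∑ j', B l i' j' * (Pi.single i 1 : Fin m → ℝ) j'
      = Wf B c p l i := by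
    intro l
    have h4 : ∀ i' : Fin m, ∑ j', B l i' j' * (Pi.single i 1 : Fin m → ℝ) j' = B l i' i :=
      fun i' => single_eval i _
    simp only [h4]
    have : (B l *ᵥ p.1) i = ∑ j', B l i j' * p.1 j' := by simp [mulVec, dotProduct]
    rw [this, key hB]
    rfl
  have e4 : ∑ l, (2 * Uf B c d p l * ∑ j', B l j j' * (Pi.single i 1 : Fin m → ℝ) j'
        + Wf B c p l j * (2 * ((B l *ᵥ p.1) i + ∑ i', c i' * ∑ j', B l i' j' * (Pi.single i 1 : Fin m → ℝ) j')))
      = ∑ l, (2 * Uf B c d p l * B l j i + 2 * Wf B c p l i * Wf B c p l j) := by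
    refine Finset.sum_congr rfl fun l _ => ?_
    rw [e2 l, e3 l]
    ring
  rw [e4]
  ring

/-- symmetrized second derivative entry -/
def Hent (B : Fin k → Matrix (Fin m) (Fin m) ℝ) (c : Fin m → ℝ)
    (p : (Fin m → ℝ) × (Fin k → ℝ)) (i j : Fin m) : ℝ :=
  8 * (p.1 i - c i) * (p.1 j - c j) + 4 * Sf c p * (Pi.single i 1 : Fin m → ℝ) j
    + ∑ l, 2 * Wf B c p l i * Wf B c p l j

lemma single_symm (i j : Fin m) :
    (Pi.single i 1 : Fin m → ℝ) j = (Pi.single j 1 : Fin m → ℝ) i := by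
  simp [Pi.single_apply, eq_comm]

lemma ent {B : Fin k → Matrix (Fin m) (Fin m) ℝ} (hB : ∀ i, (B i)ᵀ = -(B i))
    (c : Fin m → ℝ) (d : Fin k → ℝ) (p : (Fin m → ℝ) × (Fin k → ℝ)) (i j : Fin m) :
    (fderiv ℝ (fun z => XF B c d z j) p ((Pi.single i 1, fun l => (B l *ᵥ p.1) i))
      + fderiv ℝ (fun z => XF B c d z i) p ((Pi.single j 1, fun l => (B l *ᵥ p.1) j))) / 2
      = Hent B c p i j := by
  rw [master2dir hB, master2dir hB]
  unfold Hent
  rw [show ∀ a b c' e f g : ℝ, (a + b + c' + (e + f + g))/2 = ((a+e)/2 + (b+f)/2 + (c'+g)/2)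
    from fun a b c' e f g => by ring]
  congr 1
  · congr 1
    · ring
    · rw [single_symm j i]; ring
  · rw [← Finset.sum_add_distrib, Finset.sum_div]
    refine Finset.sum_congr rfl fun l _ => ?_
    rw [skew hB l j i]
    ring

lemma antisym_pair {B : Fin k → Matrix (Fin m) (Fin m) ℝ} (hB : ∀ i, (B i)ᵀ = -(B i))
    (a b : Fin m → ℝ) (l : Fin k) :
    ∑ i, (∑ j, B l i j * a j) * b i = - ∑ i, (∑ j, B l i j * b j) * a i := by
  have e1 : ∑ i, (∑ j, B l i j * a j) * b i = ∑ i, ∑ j, B l i j * a j * b i := by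
    exact Finset.sum_congr rfl fun i _ => by rw [Finset.sum_mul]
  rw [e1, Finset.sum_comm]
  rw [show (- ∑ i, (∑ j, B l i j * b j) * a i) = ∑ i, ∑ j, -(B l i j * b j * a i) from by
    rw [← Finset.sum_neg_distrib]; exact Finset.sum_congr rfl fun i _ => by
      rw [Finset.sum_mul, ← Finset.sum_neg_distrib]]
  refine Finset.sum_congr rfl fun j _ => Finset.sum_congr rfl fun i _ => ?_
  rw [skew hB l j i]
  ring

lemma quad_zero {B : Fin k → Matrix (Fin m) (Fin m) ℝ} (hB : ∀ i, (B i)ᵀ = -(B i))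
    (c : Fin m → ℝ) (p : (Fin m → ℝ) × (Fin k → ℝ)) (l : Fin k) :
    ∑ j, (p.1 j - c j) * Wf B c p l j = 0 := by
  have h := antisym_pair hB (fun j => p.1 j - c j) (fun j => p.1 j - c j) l
  have e : ∑ j, (p.1 j - c j) * Wf B c p l j
      = ∑ i, (∑ j, B l i j * (p.1 j - c j)) * (p.1 i - c i) := by
    unfold Wf
    exact Finset.sum_congr rfl fun j _ => by ring
  rw [e]
  linarith [h]

lemma Sf_swap (x y : (Fin m → ℝ) × (Fin k → ℝ)) : Sf (k := k) x.1 y = Sf y.1 x :=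
  Finset.sum_congr rfl fun i _ => by ring

lemma Uf_swap {B : Fin k → Matrix (Fin m) (Fin m) ℝ} (hB : ∀ i, (B i)ᵀ = -(B i))
    (x y : (Fin m → ℝ) × (Fin k → ℝ)) (l : Fin k) :
    Uf B x.1 x.2 y l = - Uf B y.1 y.2 x l := by
  have h := antisym_pair hB y.1 x.1 l
  unfold Uf
  rw [h]
  ring

lemma Wf_swap (B : Fin k → Matrix (Fin m) (Fin m) ℝ)
    (x y : (Fin m → ℝ) × (Fin k → ℝ)) (l : Fin k) (j : Fin m) :
    Wf B x.1 y l j = - Wf B y.1 x l j := by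
  unfold Wf
  rw [← Finset.sum_neg_distrib]
  exact Finset.sum_congr rfl fun j' _ => by ring

lemma XF_swap {B : Fin k → Matrix (Fin m) (Fin m) ℝ} (hB : ∀ i, (B i)ᵀ = -(B i))
    (x y : (Fin m → ℝ) × (Fin k → ℝ)) (j : Fin m) :
    XF B x.1 x.2 y j
      = -4 * Sf y.1 x * (x.1 j - y.1 j) + ∑ l, 2 * Uf B y.1 y.2 x l * Wf B y.1 x l j := by
  unfold XF
  rw [Sf_swap x y]
  congr 1
  · ring
  · refine Finset.sum_congr rfl fun l _ => ?_
    rw [Uf_swap hB x y l, Wf_swap B x y l j]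
    ring

lemma sum_wT {B : Fin k → Matrix (Fin m) (Fin m) ℝ} (hB : ∀ i, (B i)ᵀ = -(B i))
    (c : Fin m → ℝ) (U : Fin k → ℝ) (p : (Fin m → ℝ) × (Fin k → ℝ)) :
    ∑ j, (p.1 j - c j) * (∑ l, 2 * U l * Wf B c p l j) = 0 := by
  have e : ∀ j : Fin m, (p.1 j - c j) * (∑ l, 2 * U l * Wf B c p l j)
      = ∑ l, 2 * U l * ((p.1 j - c j) * Wf B c p l j) := fun j => by
    rw [Finset.mul_sum]; exact Finset.sum_congr rfl fun l _ => by ring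
  simp only [e]
  rw [Finset.sum_comm]
  refine Finset.sum_eq_zero fun l _ => ?_
  rw [← Finset.mul_sum, quad_zero hB, mul_zero]

lemma dot_eq {B : Fin k → Matrix (Fin m) (Fin m) ℝ} (hB : ∀ i, (B i)ᵀ = -(B i))
    (x y : (Fin m → ℝ) × (Fin k → ℝ)) :
    ∑ j, XF B y.1 y.2 x j * XF B y.1 y.2 x j
      = ∑ j, XF B x.1 x.2 y j * XF B x.1 x.2 y j := by
  have hwT := sum_wT hB y.1 (fun l => Uf B y.1 y.2 x l) x
  rw [← sub_eq_zero, ← Finset.sum_sub_distrib]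
  have e : ∀ j : Fin m, XF B y.1 y.2 x j * XF B y.1 y.2 x j
      - XF B x.1 x.2 y j * XF B x.1 x.2 y j
      = 16 * Sf y.1 x * ((x.1 j - y.1 j) * (∑ l, 2 * Uf B y.1 y.2 x l * Wf B y.1 x l j)) := by
    intro j
    rw [XF_swap hB x y j]
    unfold XF
    ring
  simp only [e]
  rw [← Finset.mul_sum, hwT, mul_zero]

lemma Sf_nonneg (c : Fin m → ℝ) (p : (Fin m → ℝ) × (Fin k → ℝ)) : 0 ≤ Sf c p :=
  Finset.sum_nonneg fun i _ => mul_self_nonneg _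

lemma Sf_eq_zero {c : Fin m → ℝ} {p : (Fin m → ℝ) × (Fin k → ℝ)} (h : Sf c p = 0) :
    p.1 = c := by
  funext i
  have h0 := (Finset.sum_eq_zero_iff_of_nonneg
    (fun i (_ : i ∈ Finset.univ) => mul_self_nonneg (p.1 i - c i))).mp h i (Finset.mem_univ i)
  have := mul_self_eq_zero.mp h0
  linarith

lemma XF_zero_iff {B : Fin k → Matrix (Fin m) (Fin m) ℝ} (hB : ∀ i, (B i)ᵀ = -(B i))
    (c : Fin m → ℝ) (d : Fin k → ℝ) (p : (Fin m → ℝ) × (Fin k → ℝ)) :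
    (fun j => XF B c d p j) = 0 ↔ p.1 = c := by
  constructor
  · intro h
    refine Sf_eq_zero (c := c) (p := p) ?_
    have h0 : ∑ j, (p.1 j - c j) * XF B c d p j = 0 :=
      Finset.sum_eq_zero fun j _ => by
        rw [show XF B c d p j = 0 from congrFun h j, mul_zero]
    have h1 : ∑ j, (p.1 j - c j) * XF B c d p j = 4 * Sf c p * Sf c p := by
      have e : ∀ j : Fin m, (p.1 j - c j) * XF B c d p j
          = 4 * Sf c p * ((p.1 j - c j) * (p.1 j - c j))
            + (p.1 j - c j) * (∑ l, 2 * Uf B c d p l * Wf B c p l j) := by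
        intro j; unfold XF; ring
      simp only [e]
      rw [Finset.sum_add_distrib, sum_wT hB c (fun l => Uf B c d p l) p, add_zero,
        ← Finset.mul_sum]
      rfl
    have h2 : Sf c p * Sf c p = 0 := by
      rw [h1] at h0; linarith
    exact mul_self_eq_zero.mp h2
  · intro h
    funext j
    have hz : ∀ i, p.1 i - c i = 0 := fun i => by rw [h]; ring
    unfold XF Wf Sf
    simp [hz]

lemma Hent_symm {B : Fin k → Matrix (Fin m) (Fin m) ℝ}
    (x y : (Fin m → ℝ) × (Fin k → ℝ)) (i j : Fin m) :
    Hent B y.1 x i j = Hent B x.1 y i j := by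
  unfold Hent
  rw [Sf_swap y x]
  congr 1
  · congr 1
    ring
  · refine Finset.sum_congr rfl fun l _ => ?_
    rw [Wf_swap B x y l i, Wf_swap B x y l j]
    ring

lemma Hent_zero_iff {B : Fin k → Matrix (Fin m) (Fin m) ℝ}
    (c : Fin m → ℝ) (p : (Fin m → ℝ) × (Fin k → ℝ)) :
    (Matrix.of fun i j => Hent B c p i j) = 0 ↔ p.1 = c := by
  constructor
  · intro h
    rcases Nat.eq_zero_or_pos m with hm | hm
    · funext i
      exact absurd i.2 (by omega)
    · set i0 : Fin m := ⟨0, hm⟩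
      have h0 : Hent B c p i0 i0 = 0 := by
        have := congrFun (congrFun h i0) i0
        simpa using this
      refine Sf_eq_zero (c := c) (p := p) ?_
      unfold Hent at h0
      rw [Pi.single_eq_same] at h0
      have hsum : 0 ≤ ∑ l, 2 * Wf B c p l i0 * Wf B c p l i0 :=
        Finset.sum_nonneg fun l _ => by nlinarith [mul_self_nonneg (Wf B c p l i0)]
      have hw : 0 ≤ 8 * (p.1 i0 - c i0) * (p.1 i0 - c i0) := by nlinarith [mul_self_nonneg (p.1 i0 - c i0)]
      have hS := Sf_nonneg (k := k) c p
      linarith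
  · intro h
    have hz : ∀ i, p.1 i - c i = 0 := fun i => by rw [h]; ring
    funext i j
    unfold Hent Sf Wf
    simp [hz]

lemma funeq_x (B : Fin k → Matrix (Fin m) (Fin m) ℝ) (y : (Fin m → ℝ) × (Fin k → ℝ)) :
    (fun x' : (Fin m → ℝ) × (Fin k → ℝ) =>
        (((-x').1 + y.1) ⬝ᵥ ((-x').1 + y.1)) ^ 2 +
          ((-x').2 + y.2 + fun l => B l *ᵥ (-x').1 ⬝ᵥ y.1) ⬝ᵥ
            ((-x').2 + y.2 + fun l => B l *ᵥ (-x').1 ⬝ᵥ y.1))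
      = Gf B y.1 y.2 := by
  funext z
  have e1 : ((-z).1 + y.1) ⬝ᵥ ((-z).1 + y.1) = Sf y.1 z := by
    simp only [dotProduct, Pi.add_apply, Prod.fst_neg, Pi.neg_apply, Sf]
    exact Finset.sum_congr rfl fun i _ => by ring
  have e2 : ∀ l : Fin k, ((-z).2 + y.2 + fun l => B l *ᵥ (-z).1 ⬝ᵥ y.1) l
      = - Uf B y.1 y.2 z l := by
    intro l
    simp only [Pi.add_apply, Prod.snd_neg, Pi.neg_apply, Prod.fst_neg, mulVec,
      dotProduct, Uf]
    have pull : ∑ i, (∑ j, B l i j * -z.1 j) * y.1 i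
        = - ∑ i, (∑ j, B l i j * z.1 j) * y.1 i := by
      rw [← Finset.sum_neg_distrib]
      refine Finset.sum_congr rfl fun i _ => ?_
      have h5 : ∑ j, B l i j * -z.1 j = -∑ j, B l i j * z.1 j := by
        rw [← Finset.sum_neg_distrib]
        exact Finset.sum_congr rfl fun j _ => by ring
      rw [h5]; ring
    rw [pull]; ring
  unfold Gf
  rw [e1, pow_two]
  congr 1
  exact Finset.sum_congr rfl fun l _ => by rw [e2 l]; ring

lemma funeq_y {B : Fin k → Matrix (Fin m) (Fin m) ℝ} (hB : ∀ i, (B i)ᵀ = -(B i))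
    (x : (Fin m → ℝ) × (Fin k → ℝ)) :
    (fun y' : (Fin m → ℝ) × (Fin k → ℝ) =>
        (((-x).1 + y'.1) ⬝ᵥ ((-x).1 + y'.1)) ^ 2 +
          ((-x).2 + y'.2 + fun l => B l *ᵥ (-x).1 ⬝ᵥ y'.1) ⬝ᵥ
            ((-x).2 + y'.2 + fun l => B l *ᵥ (-x).1 ⬝ᵥ y'.1))
      = Gf B x.1 x.2 := by
  funext z
  have e1 : ((-x).1 + z.1) ⬝ᵥ ((-x).1 + z.1) = Sf x.1 z := by
    simp only [dotProduct, Pi.add_apply, Prod.fst_neg, Pi.neg_apply, Sf]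
    exact Finset.sum_congr rfl fun i _ => by ring
  have e2 : ∀ l : Fin k, ((-x).2 + z.2 + fun l => B l *ᵥ (-x).1 ⬝ᵥ z.1) l
      = Uf B x.1 x.2 z l := by
    intro l
    simp only [Pi.add_apply, Prod.snd_neg, Pi.neg_apply, Prod.fst_neg, mulVec,
      dotProduct, Uf]
    have pull : ∑ i, (∑ j, B l i j * -x.1 j) * z.1 i
        = - ∑ i, (∑ j, B l i j * x.1 j) * z.1 i := by
      rw [← Finset.sum_neg_distrib]
      refine Finset.sum_congr rfl fun i _ => ?_
      have h5 : ∑ j, B l i j * -x.1 j = -∑ j, B l i j * x.1 j := by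
        rw [← Finset.sum_neg_distrib]
        exact Finset.sum_congr rfl fun j _ => by ring
      rw [h5]; ring
    rw [pull, antisym_pair hB x.1 z.1 l]
    ring
  unfold Gf
  rw [e1, pow_two]
  congr 1
  exact Finset.sum_congr rfl fun l _ => by rw [e2 l]

end CarnotAux2


/-- In a step-two Carnot group, with `d_G⁴(x,y) = N(x⁻¹ ∘ y)`, one has
`|X_x d_G⁴(x,y)| = |X_y d_G⁴(x,y)|` and `X²_x d_G⁴(x,y) = X²_y d_G⁴(x,y)` for all `x, y`,
and each of these quantities vanishes exactly on the set `{(x,y) : x_h = y_h}`.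
The horizontal derivatives are taken along the generators
`X_j = ∂_{x_j} + Σ_l (B^{(l)} x_h)_j ∂_{v_l}`. -/
theorem horizontal_derivatives_in_x_and_y_of_distance_fourth_power
    (m k : ℕ) (B : Fin k → Matrix (Fin m) (Fin m) ℝ)
    (hB : ∀ i, (B i)ᵀ = -(B i)) :
    letI E := (Fin m → ℝ) × (Fin k → ℝ)
    letI op : E → E → E :=
      fun a b => (a.1 + b.1, a.2 + b.2 + fun l => (B l *ᵥ a.1) ⬝ᵥ b.1)
    letI N : E → ℝ := fun z => (z.1 ⬝ᵥ z.1) ^ 2 + z.2 ⬝ᵥ z.2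
    letI dir : E → Fin m → E :=
      fun y j => (Pi.single j 1, fun l => (B l *ᵥ y.1) j)
    letI Xx : E → E → Fin m → ℝ :=
      fun x y j => fderiv ℝ (fun x' => N (op (-x') y)) x (dir x j)
    letI Xy : E → E → Fin m → ℝ :=
      fun x y j => fderiv ℝ (fun y' => N (op (-x) y')) y (dir y j)
    letI X2x : E → E → Matrix (Fin m) (Fin m) ℝ := fun x y => Matrix.of fun i j =>
      (fderiv ℝ (fun z => fderiv ℝ (fun x' => N (op (-x') y)) z (dir z j)) x (dir x i) +
        fderiv ℝ (fun z => fderiv ℝ (fun x' => N (op (-x') y)) z (dir z i)) x (dir x j)) / 2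
    letI X2y : E → E → Matrix (Fin m) (Fin m) ℝ := fun x y => Matrix.of fun i j =>
      (fderiv ℝ (fun z => fderiv ℝ (fun y' => N (op (-x) y')) z (dir z j)) y (dir y i) +
        fderiv ℝ (fun z => fderiv ℝ (fun y' => N (op (-x) y')) z (dir z i)) y (dir y j)) / 2
    ∀ x y : E,
      (Xx x y ⬝ᵥ Xx x y = Xy x y ⬝ᵥ Xy x y) ∧
      (X2x x y = X2y x y) ∧
      (Xx x y = 0 ↔ x.1 = y.1) ∧
      (Xy x y = 0 ↔ x.1 = y.1) ∧
      (X2x x y = 0 ↔ x.1 = y.1) := by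
  intro x y
  have hfx := CarnotAux2.funeq_x B y
  have hfy := CarnotAux2.funeq_y hB x
  refine ⟨?_, ?_, ?_, ?_, ?_⟩
  · simp only [hfx, hfy]
    simp only [CarnotAux2.master1dir hB, dotProduct]
    exact CarnotAux2.dot_eq hB x y
  · simp only [hfx, hfy]
    simp only [CarnotAux2.master1dir hB, CarnotAux2.ent hB]
    ext i j
    simp only [Matrix.of_apply]
    exact CarnotAux2.Hent_symm x y i j
  · simp only [hfx]
    simp only [CarnotAux2.master1dir hB]
    exact CarnotAux2.XF_zero_iff hB y.1 y.2 x
  · simp only [hfy]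
    simp only [CarnotAux2.master1dir hB]
    exact (CarnotAux2.XF_zero_iff hB x.1 x.2 y).trans eq_comm
  · simp only [hfx]
    simp only [CarnotAux2.master1dir hB, CarnotAux2.ent hB]
    exact CarnotAux2.Hent_zero_iff y.1 x
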